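/- Let (w_i)_{i=1}^∞ be a non-increasing sequence of positive reals with w_i → 0 and ∑ w_i = ∞, and let W(n) = ∑_{i=1}^n w_i. Then there exists a strictly increasing sequence (d_k)_{k=1}^∞ of positive integers such that for all k ≥ 1: W(∑_{j=1}^{k-1} d_j) ≤ (1/2) W(d_k) and W(d_{k-1} + d_k) − W(d_k) ≤ 2^{1−k} W(d_{k-1}) (with d_0 = 0 and the empty sum equal to 0). -/

import Mathlib

open Filter

/-- For a non-increasing sequence `(w_i)` of positive reals tending to `0` whose
partial sums `W(n) = ∑_{i=1}^n w_i` tend to infinity, there is a strictly increasing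
sequence `(d_k)_{k≥1}` of positive integers (with `d_0 = 0`) such that for all `k ≥ 1`,
`W(∑_{j=1}^{k-1} d_j) ≤ (1/2) W(d_k)` and `W(d_{k-1}+d_k) − W(d_k) ≤ 2^{1−k} W(d_{k-1})`. -/
theorem stmt_6 (w : ℕ → ℝ) (hpos : ∀ i, 0 < w i) (hmono : Antitone w)
    (h0 : Tendsto w atTop (nhds 0))
    (hdiv : Tendsto (fun n => ∑ i ∈ Finset.range n, w i) atTop atTop) :
    ∃ d : ℕ → ℕ, d 0 = 0 ∧ StrictMono d ∧ ∀ k : ℕ, 1 ≤ k →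
      ((∑ i ∈ Finset.range (∑ j ∈ Finset.Icc 1 (k - 1), d j), w i)
          ≤ (∑ i ∈ Finset.range (d k), w i) / 2) ∧
      ((∑ i ∈ Finset.range (d (k - 1) + d k), w i) - (∑ i ∈ Finset.range (d k), w i)
          ≤ (2 : ℝ) ^ (1 - (k : ℤ)) * ∑ i ∈ Finset.range (d (k - 1)), w i) := by
  set W : ℕ → ℝ := fun n => ∑ i ∈ Finset.range n, w i with hWdef
  have hWnn : ∀ n, 0 ≤ W n := fun n => Finset.sum_nonneg fun i _ => (hpos i).le
  have hWpos : ∀ n, 0 < n → 0 < W n := by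
    intro n hn
    exact Finset.sum_pos (fun i _ => hpos i)
      (Finset.nonempty_range_iff.mpr hn.ne')
  -- key step: bound on tail chunk
  have hchunk : ∀ a b : ℕ, W (a + b) - W b ≤ (a : ℝ) * w b := by
    intro a b
    have h1 : ∑ i ∈ Finset.Ico b (a + b), w i = W (a + b) - W b :=
      Finset.sum_Ico_eq_sub _ (Nat.le_add_left b a)
    rw [← h1]
    have h2 : ∑ i ∈ Finset.Ico b (a + b), w i ≤ (Finset.Ico b (a + b)).card • w b :=
      Finset.sum_le_card_nsmul _ _ _ (fun i hi => hmono (Finset.mem_Ico.mp hi).1)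
    simpa [Nat.card_Ico, Nat.add_sub_cancel, nsmul_eq_mul] using h2
  -- key existence lemma for the recursion
  have key : ∀ (p : ℕ × ℕ) (k : ℕ), ∃ N, p.1 < N ∧ 2 * W p.2 ≤ W N ∧
      (p.1 : ℝ) * w N ≤ 2 ^ (-(k : ℤ)) * W p.1 := by
    rintro ⟨m, S⟩ k
    rcases Nat.eq_zero_or_pos m with hm | hm
    · obtain ⟨N, hN1, hN2⟩ :=
        ((hdiv.eventually_ge_atTop (2 * W S)).and (eventually_gt_atTop m)).exists
      refine ⟨N, hN2, hN1, ?_⟩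
      simp only [hm]
      simp [hWdef]
    · have hc : (0 : ℝ) < 2 ^ (-(k : ℤ)) * W m / m := by
        have := hWpos m hm
        positivity
      have hev : ∀ᶠ n in atTop, w n < 2 ^ (-(k : ℤ)) * W m / m :=
        h0.eventually_lt_const hc
      obtain ⟨N, ⟨hN1, hN2⟩, hN3⟩ :=
        (((hdiv.eventually_ge_atTop (2 * W S)).and hev).and (eventually_gt_atTop m)).exists
      refine ⟨N, hN3, hN1, ?_⟩
      have hm' : (0 : ℝ) < (m : ℝ) := by exact_mod_cast hm
      calc (m : ℝ) * w N ≤ (m : ℝ) * (2 ^ (-(k : ℤ)) * W m / m) :=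
            mul_le_mul_of_nonneg_left hN2.le hm'.le
        _ = 2 ^ (-(k : ℤ)) * W m := by field_simp
  choose F hF1 hF2 hF3 using key
  set g : ℕ → ℕ × ℕ := fun k => Nat.rec (0, 0) (fun k p => (F p k, p.2 + F p k)) k with hg
  have hg0 : g 0 = (0, 0) := rfl
  have hgs : ∀ k, g (k + 1) = (F (g k) k, (g k).2 + F (g k) k) := fun k => rfl
  have hsum : ∀ k, ∑ j ∈ Finset.Icc 1 k, (g j).1 = (g k).2 := by
    intro k
    induction k with
    | zero => simp [hg0]
    | succ k ih =>
      rw [← Finset.Ico_add_one_right_eq_Icc, Finset.sum_Ico_succ_top (Nat.one_le_iff_ne_zero.mpr k.succ_ne_zero),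
        Nat.succ_eq_add_one, Finset.Ico_add_one_right_eq_Icc, ih, hgs k]
  refine ⟨fun k => (g k).1, rfl, ?_, ?_⟩
  · apply strictMono_nat_of_lt_succ
    intro k
    rw [hgs k]
    exact hF1 (g k) k
  · rintro ⟨⟩ hk
    · omega
    rename_i k
    have hd : (g (k + 1)).1 = F (g k) k := by rw [hgs k]
    simp only [Nat.succ_sub_one]
    constructor
    · show W (∑ j ∈ Finset.Icc 1 k, (g j).1) ≤ W ((g (k+1)).1) / 2
      rw [hsum k, hd]
      have := hF2 (g k) k
      linarith
    · show W ((g k).1 + (g (k+1)).1) - W ((g (k+1)).1) ≤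
        2 ^ (1 - ((k + 1 : ℕ) : ℤ)) * W (g k).1
      have h1 := hchunk (g k).1 ((g (k+1)).1)
      have h2 := hF3 (g k) k
      rw [hd] at h1 ⊢
      have he : (1 : ℤ) - ((k + 1 : ℕ) : ℤ) = -(k : ℤ) := by push_cast; ring
      rw [he]
      linarith
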